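/- Let μ > 0, δ > 0, P > 1, q ≥ 1 with μδ ≥ 1, and let φ_s(z) = 1/(1+z^s). Then there is a constant C₀ (depending only on P, q) such that for all z ≥ 0, ∫_0^∞ μ e^{-μ|x-z|} φ_{P-1+q}(δ^{-1}x) dx ≤ C₀ φ_{P-1+q}(δ^{-1}z). -/

import Mathlib

open MeasureTheory

section helperspart

open MeasureTheory Set Real

-- ∫_{Ioi a} e^{-(μx)} = μ⁻¹ e^{-(μa)}
lemma aux_exp_Ioi {μ : ℝ} (hμ : 0 < μ) (a : ℝ) :
    ∫ x in Set.Ioi a, Real.exp (-(μ * x)) = μ⁻¹ * Real.exp (-(μ * a)) := by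
  have h := integral_comp_mul_left_Ioi (fun y => Real.exp (-y)) a hμ
  simp only [smul_eq_mul] at h
  rw [h, integral_exp_neg_Ioi]

lemma aux_int_Ioi {μ : ℝ} (hμ : 0 < μ) (a : ℝ) :
    IntegrableOn (fun x => Real.exp (-(μ * x))) (Set.Ioi a) := by
  simpa [neg_mul] using exp_neg_integrableOn_Ioi a hμ

lemma kernel_integrableOn {μ z : ℝ} (hμ : 0 < μ) :
    IntegrableOn (fun x => μ * Real.exp (-μ * |x - z|)) (Set.Ioi 0) := by
  apply Integrable.mono' (g := fun x => μ * Real.exp (μ * z) * Real.exp (-(μ * x)))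
  · exact ((aux_int_Ioi hμ 0).const_mul _)
  · exact (by continuity : Continuous fun x => μ * Real.exp (-μ * |x - z|)).aestronglyMeasurable
  · refine Filter.Eventually.of_forall fun x => ?_
    rw [Real.norm_eq_abs, abs_of_nonneg (by positivity)]
    rw [mul_assoc, ← Real.exp_add]
    apply mul_le_mul_of_nonneg_left _ hμ.le
    apply Real.exp_le_exp.mpr
    have : x - z ≤ |x - z| := le_abs_self _
    nlinarith

lemma kernel_integral_le {μ z : ℝ} (hμ : 0 < μ) (hz : 0 ≤ z) :
    ∫ x in Set.Ioi 0, μ * Real.exp (-μ * |x - z|) ≤ 2 := by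
  have hsplit : Set.Ioi (0:ℝ) = Set.Ioc 0 z ∪ Set.Ioi z := (Set.Ioc_union_Ioi_eq_Ioi hz).symm
  rw [hsplit, setIntegral_union (Set.Ioc_disjoint_Ioi le_rfl) measurableSet_Ioi
    ((kernel_integrableOn hμ).mono_set (by rw [hsplit]; exact Set.subset_union_left))
    ((kernel_integrableOn hμ).mono_set (by rw [hsplit]; exact Set.subset_union_right))]
  have h2 : ∫ x in Set.Ioi z, μ * Real.exp (-μ * |x - z|) = 1 := by
    rw [setIntegral_congr_fun measurableSet_Ioi
      (g := fun x => μ * Real.exp (μ * z) * Real.exp (-(μ * x)))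
      (fun x hx => by
        rw [abs_of_nonneg (by simp only [Set.mem_Ioi] at hx; linarith)]
        have h : -μ * (x - z) = μ * z + -(μ * x) := by ring
        rw [h, Real.exp_add, ← mul_assoc])]
    rw [integral_const_mul, aux_exp_Ioi hμ z]
    have e1 : Real.exp (μ * z) * Real.exp (-(μ * z)) = 1 := by rw [← Real.exp_add]; simp
    have h : μ * Real.exp (μ * z) * (μ⁻¹ * Real.exp (-(μ * z)))
        = μ * μ⁻¹ * (Real.exp (μ * z) * Real.exp (-(μ * z))) := by ring
    rw [h, mul_inv_cancel₀ hμ.ne', e1, one_mul]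
  have h1 : ∫ x in Set.Ioc 0 z, μ * Real.exp (-μ * |x - z|) ≤ 1 := by
    rw [setIntegral_congr_fun measurableSet_Ioc
      (g := fun x => μ * Real.exp (-(μ * z)) * Real.exp (μ * x))
      (fun x hx => by
        rw [abs_of_nonpos (by simp only [Set.mem_Ioc] at hx; linarith)]
        have h : -μ * -(x - z) = -(μ * z) + μ * x := by ring
        rw [h, Real.exp_add, ← mul_assoc])]
    rw [← intervalIntegral.integral_of_le hz, intervalIntegral.integral_const_mul,
      intervalIntegral.integral_comp_mul_left (fun y => Real.exp y) hμ.ne']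
    simp only [smul_eq_mul, mul_zero, integral_exp]
    have e1 : Real.exp (-(μ * z)) * Real.exp (μ * z) = 1 := by rw [← Real.exp_add]; simp
    have h : μ * Real.exp (-(μ * z)) * (μ⁻¹ * (Real.exp (μ * z) - Real.exp 0))
        = μ * μ⁻¹ * (Real.exp (-(μ * z)) * Real.exp (μ * z))
          - μ * μ⁻¹ * (Real.exp (-(μ * z)) * Real.exp 0) := by ring
    rw [h, mul_inv_cancel₀ hμ.ne', e1, one_mul, one_mul, Real.exp_zero, mul_one]
    linarith [(Real.exp_pos (-(μ * z))).le]
  linarith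

lemma polyexp (s : ℝ) (hs : 0 ≤ s) :
    ∃ K : ℝ, 0 < K ∧ ∀ t : ℝ, 0 ≤ t → t * Real.exp (-(t/2)) * (1 + t ^ s) ≤ K := by
  set c := ⌈s⌉₊ with hc
  set n := c + 1 with hn
  refine ⟨2 + 2 * 2 ^ n * (Nat.factorial n : ℝ), by positivity, fun t ht => ?_⟩
  have hepos : (0:ℝ) < Real.exp (-(t/2)) := Real.exp_pos _
  by_cases h1 : t ≤ 1
  · have hts : t ^ s ≤ 1 := Real.rpow_le_one ht h1 hs
    have he : Real.exp (-(t/2)) ≤ 1 := Real.exp_le_one_iff.mpr (by linarith)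
    have hfac : (0:ℝ) ≤ 2 * 2 ^ n * (Nat.factorial n : ℝ) := by positivity
    have hrn : (0:ℝ) ≤ t ^ s := Real.rpow_nonneg ht s
    have hte : t * Real.exp (-(t/2)) ≤ 1 := mul_le_one₀ h1 hepos.le he
    have : t * Real.exp (-(t/2)) * (1 + t ^ s) ≤ 1 * 2 :=
      mul_le_mul hte (by linarith) (by linarith) (by norm_num)
    linarith
  · push_neg at h1
    have h1 : (1:ℝ) ≤ t := h1.le
    have hts : t ^ s ≤ t ^ (c : ℕ) := by
      rw [← Real.rpow_natCast t c]
      exact Real.rpow_le_rpow_of_exponent_le h1 (Nat.le_ceil s)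
    have key : (t/2) ^ n / (Nat.factorial n : ℝ) ≤ Real.exp (t/2) := by
      simpa using Real.pow_div_factorial_le_exp (t/2) (by linarith) n
    have hfac : (0:ℝ) < (Nat.factorial n : ℝ) := by positivity
    have h2 : t ^ n ≤ 2 ^ n * (Nat.factorial n : ℝ) * Real.exp (t/2) := by
      have hd : (t/2)^n = t^n / 2^n := div_pow t 2 n
      rw [hd] at key
      rw [div_div] at key
      have := (div_le_iff₀ (by positivity)).mp key
      linarith [this]
    have hE : Real.exp (t/2) * Real.exp (-(t/2)) = 1 := by rw [← Real.exp_add]; simp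
    have htn : t ≤ t ^ n := le_self_pow₀ h1 (by omega)
    have hstep : t * (1 + t ^ s) ≤ 2 * t ^ n := by
      have : t * t ^ s ≤ t * t ^ (c:ℕ) := by
        apply mul_le_mul_of_nonneg_left hts (by linarith)
      have hpow : t * t ^ (c:ℕ) = t ^ n := by rw [hn, pow_succ]; ring
      nlinarith
    calc t * Real.exp (-(t/2)) * (1 + t ^ s)
        = t * (1 + t ^ s) * Real.exp (-(t/2)) := by ring
      _ ≤ 2 * t ^ n * Real.exp (-(t/2)) := by
          apply mul_le_mul_of_nonneg_right hstep hepos.le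
      _ ≤ 2 * (2 ^ n * (Nat.factorial n : ℝ) * Real.exp (t/2)) * Real.exp (-(t/2)) := by
          apply mul_le_mul_of_nonneg_right _ hepos.le
          linarith
      _ = 2 * 2 ^ n * (Nat.factorial n : ℝ) * (Real.exp (t/2) * Real.exp (-(t/2))) := by ring
      _ = 2 * 2 ^ n * (Nat.factorial n : ℝ) := by rw [hE]; ring
      _ ≤ 2 + 2 * 2 ^ n * (Nat.factorial n : ℝ) := by linarith

end helperspart

/-- Convolution with a fast exponential kernel preserves the boundary layer
weight: for `P > 1`, `q ≥ 1` there is `C₀ > 0` (depending only on `P, q`) such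
that for `μ, δ > 0` with `μδ ≥ 1` and all `z ≥ 0`,
`∫₀^∞ μ e^{-μ|x-z|} φ_{P-1+q}(δ⁻¹x) dx ≤ C₀ φ_{P-1+q}(δ⁻¹z)`,
where `φ_s(y) = 1/(1+y^s)`. -/
theorem exp_kernel_preserves_bl (P q : ℝ) (hP : 1 < P) (hq : 1 ≤ q) :
    ∃ C₀ : ℝ, 0 < C₀ ∧ ∀ μ δ : ℝ, 0 < μ → 0 < δ → 1 ≤ μ * δ → ∀ z : ℝ, 0 ≤ z →
      (∫ x in Set.Ioi (0 : ℝ),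
          μ * Real.exp (-μ * |x - z|) * (1 + (x/δ) ^ (P - 1 + q))⁻¹)
        ≤ C₀ * (1 + (z/δ) ^ (P - 1 + q))⁻¹ := by

  set s : ℝ := P - 1 + q with hsdef
  have hs0 : (0:ℝ) ≤ s := by simp only [hsdef]; linarith
  obtain ⟨K, hK, hKb⟩ := polyexp s hs0
  have h2s : (0:ℝ) < (2:ℝ) ^ s := Real.rpow_pos_of_pos two_pos s
  refine ⟨2 * (2:ℝ) ^ s + K, by positivity, fun μ δ hμ hδ hμδ z hz => ?_⟩
  have hzδ : (0:ℝ) ≤ z / δ := div_nonneg hz hδ.le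
  have hrz : (0:ℝ) ≤ (z/δ) ^ s := Real.rpow_nonneg hzδ s
  have hden : (0:ℝ) < 1 + (z/δ) ^ s := by linarith
  have hφz : (0:ℝ) < (1 + (z/δ) ^ s)⁻¹ := by positivity
  set A : ℝ := (2:ℝ) ^ s * (1 + (z/δ) ^ s)⁻¹ with hA
  have hA0 : 0 ≤ A := by positivity
  set k : ℝ → ℝ := fun x => μ * Real.exp (-μ * |x - z|) with hk
  have hk0 : ∀ x, 0 ≤ k x := fun x => by positivity
  set ind : ℝ → ℝ :=
    Set.indicator (Set.Ioc 0 (z/2)) (fun _ => μ * Real.exp (-μ * (z/2))) with hind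
  have hkint : IntegrableOn k (Set.Ioi 0) := kernel_integrableOn hμ
  -- measurability of f
  have hfmeas : AEStronglyMeasurable
      (fun x => μ * Real.exp (-μ * |x - z|) * (1 + (x/δ) ^ s)⁻¹)
      (volume.restrict (Set.Ioi 0)) := by
    apply Measurable.aestronglyMeasurable
    fun_prop
  -- integrability of f
  have hf_int : IntegrableOn
      (fun x => μ * Real.exp (-μ * |x - z|) * (1 + (x/δ) ^ s)⁻¹) (Set.Ioi 0) := by
    apply Integrable.mono' hkint hfmeas
    rw [ae_restrict_iff' measurableSet_Ioi]
    refine Filter.Eventually.of_forall fun x hx => ?_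
    have hx0 : (0:ℝ) < x := hx
    have hrx : (0:ℝ) ≤ (x/δ) ^ s := Real.rpow_nonneg (div_nonneg hx0.le hδ.le) s
    have hdx : (0:ℝ) < 1 + (x/δ) ^ s := by linarith
    rw [Real.norm_eq_abs, abs_of_nonneg (by positivity)]
    calc μ * Real.exp (-μ * |x - z|) * (1 + (x/δ) ^ s)⁻¹
        ≤ μ * Real.exp (-μ * |x - z|) * 1 := by
          apply mul_le_mul_of_nonneg_left _ (by positivity)
          exact inv_le_one_of_one_le₀ (by linarith)
      _ = k x := by rw [mul_one]
  -- integrability of indicator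
  have hind_int : Integrable ind (volume.restrict (Set.Ioi 0)) := by
    rw [hind, integrable_indicator_iff measurableSet_Ioc]
    refine (integrableOn_const_iff (by finiteness)).mpr (Or.inr ?_)
    exact lt_of_le_of_lt (Measure.restrict_apply_le _ _) measure_Ioc_lt_top
  -- pointwise bound
  have hpt : ∀ x ∈ Set.Ioi (0:ℝ),
      μ * Real.exp (-μ * |x - z|) * (1 + (x/δ) ^ s)⁻¹ ≤ A * k x + ind x := by
    intro x hx
    have hx0 : (0:ℝ) < x := hx
    have hxδ : (0:ℝ) ≤ x / δ := div_nonneg hx0.le hδ.le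
    have hrx : (0:ℝ) ≤ (x/δ) ^ s := Real.rpow_nonneg hxδ s
    have hdx : (0:ℝ) < 1 + (x/δ) ^ s := by linarith
    rcases le_or_gt x (z/2) with hcase | hcase
    · have hmem : x ∈ Set.Ioc (0:ℝ) (z/2) := ⟨hx0, hcase⟩
      have hiv : ind x = μ * Real.exp (-μ * (z/2)) := by
        rw [hind, Set.indicator_of_mem hmem]
      have habs : z / 2 ≤ |x - z| := by
        rw [abs_sub_comm, abs_of_nonneg (by linarith)]; linarith
      have hker : k x ≤ μ * Real.exp (-μ * (z/2)) := by
        apply mul_le_mul_of_nonneg_left _ hμ.le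
        apply Real.exp_le_exp.mpr
        nlinarith
      have hf_le : μ * Real.exp (-μ * |x - z|) * (1 + (x/δ) ^ s)⁻¹ ≤ k x := by
        calc μ * Real.exp (-μ * |x - z|) * (1 + (x/δ) ^ s)⁻¹
            ≤ μ * Real.exp (-μ * |x - z|) * 1 := by
              apply mul_le_mul_of_nonneg_left _ (by positivity)
              exact inv_le_one_of_one_le₀ (by linarith)
          _ = k x := by rw [mul_one]
      have hAk : 0 ≤ A * k x := mul_nonneg hA0 (hk0 x)
      rw [hiv]
      linarith
    · have hiv : ind x = 0 := by
        rw [hind, Set.indicator_of_notMem (fun h => absurd h.2 (not_le.mpr hcase))]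
      have hb : 1 + (z/δ) ^ s ≤ (2:ℝ) ^ s * (1 + (x/δ) ^ s) := by
        have h1 : (z/δ) ^ s ≤ (2 * (x/δ)) ^ s := by
          apply Real.rpow_le_rpow hzδ _ hs0
          rw [mul_div_assoc'] at *
          · rw [div_le_div_iff₀ hδ hδ]; nlinarith
        have h2 : (2 * (x/δ)) ^ s = (2:ℝ) ^ s * (x/δ) ^ s :=
          Real.mul_rpow (by norm_num) hxδ
        have h3 : (1:ℝ) ≤ (2:ℝ) ^ s := by
          have := Real.rpow_le_rpow_of_exponent_le (by norm_num : (1:ℝ) ≤ 2) hs0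
          simpa using this
        nlinarith
      have hφ : (1 + (x/δ) ^ s)⁻¹ ≤ (2:ℝ) ^ s * (1 + (z/δ) ^ s)⁻¹ := by
        rw [← div_eq_mul_inv, inv_eq_one_div, div_le_div_iff₀ hdx hden]
        linarith
      have : μ * Real.exp (-μ * |x - z|) * (1 + (x/δ) ^ s)⁻¹
          ≤ μ * Real.exp (-μ * |x - z|) * ((2:ℝ) ^ s * (1 + (z/δ) ^ s)⁻¹) :=
        mul_le_mul_of_nonneg_left hφ (by positivity)
      rw [hiv]
      calc μ * Real.exp (-μ * |x - z|) * (1 + (x/δ) ^ s)⁻¹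
          ≤ μ * Real.exp (-μ * |x - z|) * ((2:ℝ) ^ s * (1 + (z/δ) ^ s)⁻¹) := this
        _ = A * k x + 0 := by rw [hA, hk]; ring
  -- the integral bound
  have hmono := setIntegral_mono_on hf_int
    ((hkint.const_mul A).add hind_int) measurableSet_Ioi hpt
  have hsum : ∫ x in Set.Ioi (0:ℝ), (A * k x + ind x)
      = A * (∫ x in Set.Ioi (0:ℝ), k x) + ∫ x in Set.Ioi (0:ℝ), ind x := by
    rw [integral_add (hkint.const_mul A) hind_int, integral_const_mul]
  have hindval : ∫ x in Set.Ioi (0:ℝ), ind x = (z/2) * (μ * Real.exp (-μ * (z/2))) := by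
    rw [hind, integral_indicator measurableSet_Ioc,
      Measure.restrict_restrict measurableSet_Ioc,
      Set.inter_eq_self_of_subset_left Set.Ioc_subset_Ioi_self,
      setIntegral_const, Real.volume_real_Ioc_of_le (by linarith), smul_eq_mul]
    ring
  -- bound on A * ∫ k
  have hB1 : A * (∫ x in Set.Ioi (0:ℝ), k x) ≤ A * 2 :=
    mul_le_mul_of_nonneg_left (kernel_integral_le hμ hz) hA0
  -- bound on the indicator integral
  have hB2 : (z/2) * (μ * Real.exp (-μ * (z/2))) ≤ K * (1 + (z/δ) ^ s)⁻¹ := by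
    set t : ℝ := μ * z with htdef
    have ht : 0 ≤ t := by positivity
    have hKt := hKb t ht
    have hinv : δ⁻¹ ≤ μ := by
      rw [inv_le_iff_one_le_mul₀ hδ]
      linarith [hμδ]
    have hzd : z / δ ≤ t := by
      rw [div_eq_mul_inv, htdef, mul_comm μ z]
      exact mul_le_mul_of_nonneg_left hinv hz
    have hr : (z/δ) ^ s ≤ t ^ s := Real.rpow_le_rpow hzδ hzd hs0
    have hexp : -μ * (z/2) = -(t/2) := by rw [htdef]; ring
    rw [hexp, ← div_eq_mul_inv, le_div_iff₀ hden]
    have he : (0:ℝ) < Real.exp (-(t/2)) := Real.exp_pos _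
    have hts : (0:ℝ) ≤ t ^ s := Real.rpow_nonneg ht s
    calc (z/2) * (μ * Real.exp (-(t/2))) * (1 + (z/δ) ^ s)
        = (t/2) * Real.exp (-(t/2)) * (1 + (z/δ) ^ s) := by rw [htdef]; ring
      _ ≤ (t/2) * Real.exp (-(t/2)) * (1 + t ^ s) := by
          apply mul_le_mul_of_nonneg_left (by linarith) (by positivity)
      _ ≤ t * Real.exp (-(t/2)) * (1 + t ^ s) := by
          apply mul_le_mul_of_nonneg_right _ (by linarith)
          apply mul_le_mul_of_nonneg_right _ he.le
          linarith
      _ ≤ K := hKt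
  calc (∫ x in Set.Ioi (0:ℝ),
        μ * Real.exp (-μ * |x - z|) * (1 + (x/δ) ^ s)⁻¹)
      ≤ ∫ x in Set.Ioi (0:ℝ), (A * k x + ind x) := hmono
    _ = A * (∫ x in Set.Ioi (0:ℝ), k x) + ∫ x in Set.Ioi (0:ℝ), ind x := hsum
    _ ≤ A * 2 + K * (1 + (z/δ) ^ s)⁻¹ := by rw [hindval]; linarith
    _ = (2 * (2:ℝ) ^ s + K) * (1 + (z/δ) ^ s)⁻¹ := by rw [hA]; ring
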